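/- Let η ∈ ℝ^s be a random vector with independent components η_j following Laplace (double-exponential) distributions with scale parameters ψ_j, where ψ_j ∈ [a, b] for all j with 0 < a ≤ b. Then for any δ > 0 and any fixed η₀ ∈ ℝ^s, P(‖η − η₀‖₂ < δ) ≥ exp(−s·log 2 − Σ_{j=1}^s |η₀ⱼ|/a) · (1 − e^{−δ/(b√s)})^s. -/

import Mathlib

open MeasureTheory
open scoped BigOperators

/-- The Laplace (double-exponential) distribution `DE(ψ)` with scale `ψ`,
having density `x ↦ (1/(2ψ)) e^{−|x|/ψ}` with respect to Lebesgue measure. -/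
noncomputable def laplace (ψ : ℝ) : Measure ℝ :=
  volume.withDensity fun x => ENNReal.ofReal ((1 / (2 * ψ)) * Real.exp (-|x| / ψ))

/-- If `η ∈ ℝ^s` has independent components `η_j ∼ DE(ψ_j)` with `ψ_j ∈ [a, b]`,
`0 < a ≤ b`, then for any `δ > 0` and `η₀ ∈ ℝ^s`,
`P(‖η − η₀‖₂ < δ) ≥ exp(−s log 2 − Σ_j |η₀_j|/a) (1 − e^{−δ/(b√s)})^s`. -/

lemma integral_exp_div (ψ : ℝ) (hψ : 0 < ψ) (u v : ℝ) :
    ∫ x in u..v, (1 / (2 * ψ)) * Real.exp (-x / ψ) =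
      (1/2) * (Real.exp (-u/ψ) - Real.exp (-v/ψ)) := by
  have h : ∀ x : ℝ, HasDerivAt (fun y => -(1/2) * Real.exp (-y/ψ))
      ((1 / (2 * ψ)) * Real.exp (-x / ψ)) x := by
    intro x
    have h1 : HasDerivAt (fun y : ℝ => -y/ψ) (-1/ψ) x := by
      simpa using ((hasDerivAt_id x).neg.div_const ψ)
    have h2 := (h1.exp).const_mul (-(1/2) : ℝ)
    exact h2.congr_deriv (by ring)
  have hint : IntervalIntegrable (fun x => (1 / (2 * ψ)) * Real.exp (-x / ψ)) volume u v := by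
    apply Continuous.intervalIntegrable
    continuity
  rw [intervalIntegral.integral_eq_sub_of_hasDerivAt (fun x _ => h x) hint]
  ring

lemma integral_exp_div' (ψ : ℝ) (hψ : 0 < ψ) (u v : ℝ) :
    ∫ x in u..v, (1 / (2 * ψ)) * Real.exp (x / ψ) =
      (1/2) * (Real.exp (v/ψ) - Real.exp (u/ψ)) := by
  have h : ∀ x : ℝ, HasDerivAt (fun y => (1/2) * Real.exp (y/ψ))
      ((1 / (2 * ψ)) * Real.exp (x / ψ)) x := by
    intro x
    have h1 : HasDerivAt (fun y : ℝ => y/ψ) (1/ψ) x := by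
      simpa using ((hasDerivAt_id x).div_const ψ)
    have h2 := (h1.exp).const_mul ((1/2) : ℝ)
    exact h2.congr_deriv (by ring)
  have hint : IntervalIntegrable (fun x => (1 / (2 * ψ)) * Real.exp (x / ψ)) volume u v := by
    apply Continuous.intervalIntegrable
    continuity
  rw [intervalIntegral.integral_eq_sub_of_hasDerivAt (fun x _ => h x) hint]
  ring

lemma laplace_Ioo_nonneg (ψ : ℝ) (hψ : 0 < ψ) (t c : ℝ) (ht : 0 ≤ t) (hc : 0 ≤ c) :
    laplace ψ (Set.Ioo t (t + c)) =
      ENNReal.ofReal ((1/2) * (Real.exp (-t/ψ) - Real.exp (-(t+c)/ψ))) := by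
  rw [laplace, withDensity_apply _ measurableSet_Ioo]
  have hcong : ∀ x ∈ Set.Ioo t (t + c),
      ENNReal.ofReal ((1 / (2 * ψ)) * Real.exp (-|x| / ψ)) =
      ENNReal.ofReal ((1 / (2 * ψ)) * Real.exp (-x / ψ)) := by
    intro x hx
    rw [abs_of_nonneg (le_of_lt (lt_of_le_of_lt ht hx.1))]
  rw [setLIntegral_congr_fun measurableSet_Ioo hcong]
  rw [← ofReal_integral_eq_lintegral_ofReal]
  · rw [← MeasureTheory.integral_Ioc_eq_integral_Ioo,
      ← intervalIntegral.integral_of_le (by linarith)]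
    rw [integral_exp_div ψ hψ]
  · exact ((by fun_prop : Continuous fun x : ℝ => (1 / (2 * ψ)) * Real.exp (-x / ψ)).integrableOn_Ioc).mono_set Set.Ioo_subset_Ioc_self
  · filter_upwards with x
    positivity

lemma laplace_Ioo_nonpos (ψ : ℝ) (hψ : 0 < ψ) (t c : ℝ) (ht : t ≤ 0) (hc : 0 ≤ c) :
    laplace ψ (Set.Ioo (t - c) t) =
      ENNReal.ofReal ((1/2) * (Real.exp (t/ψ) - Real.exp ((t-c)/ψ))) := by
  rw [laplace, withDensity_apply _ measurableSet_Ioo]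
  have hcong : ∀ x ∈ Set.Ioo (t - c) t,
      ENNReal.ofReal ((1 / (2 * ψ)) * Real.exp (-|x| / ψ)) =
      ENNReal.ofReal ((1 / (2 * ψ)) * Real.exp (x / ψ)) := by
    intro x hx
    rw [abs_of_nonpos (le_of_lt (lt_of_lt_of_le hx.2 ht)), neg_neg]
  rw [setLIntegral_congr_fun measurableSet_Ioo hcong]
  rw [← ofReal_integral_eq_lintegral_ofReal]
  · rw [← MeasureTheory.integral_Ioc_eq_integral_Ioo,
      ← intervalIntegral.integral_of_le (by linarith)]
    rw [integral_exp_div' ψ hψ]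
  · exact ((by fun_prop : Continuous fun x : ℝ => (1 / (2 * ψ)) * Real.exp (x / ψ)).integrableOn_Ioc).mono_set Set.Ioo_subset_Ioc_self
  · filter_upwards with x
    positivity

lemma laplace_ball (ψ a b : ℝ) (ha : 0 < a) (hab : a ≤ b) (hψm : ψ ∈ Set.Icc a b)
    (t c : ℝ) (hc : 0 ≤ c) :
    ENNReal.ofReal ((1/2) * Real.exp (-|t|/a) * (1 - Real.exp (-c/b))) ≤
      laplace ψ {x | |x - t| < c} := by
  have hψ0 : 0 < ψ := lt_of_lt_of_le ha hψm.1
  have hb : 0 < b := lt_of_lt_of_le ha hab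
  have hec : Real.exp (-c/ψ) ≤ Real.exp (-c/b) := by
    apply Real.exp_le_exp.2
    rw [neg_div, neg_div, neg_le_neg_iff]
    gcongr
    exact hψm.2
  have hec1 : Real.exp (-c/ψ) ≤ 1 := by
    apply Real.exp_le_one_iff.2
    rw [neg_div]
    simp [div_nonneg hc hψ0.le]
  rcases le_or_gt 0 t with ht | ht
  · have hsub : Set.Ioo t (t + c) ⊆ {x | |x - t| < c} := by
      intro x hx
      simp only [Set.mem_setOf_eq]
      rw [abs_of_nonneg (by linarith [hx.1])]
      linarith [hx.2]
    refine le_trans ?_ (measure_mono hsub)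
    rw [laplace_Ioo_nonneg ψ hψ0 t c ht hc]
    apply ENNReal.ofReal_le_ofReal
    have heq : -(t+c)/ψ = -t/ψ + -c/ψ := by ring
    rw [heq, Real.exp_add, abs_of_nonneg ht]
    have he1 : Real.exp (-t/a) ≤ Real.exp (-t/ψ) := by
      apply Real.exp_le_exp.2
      rw [neg_div, neg_div, neg_le_neg_iff]
      gcongr
      exact hψm.1
    have h1 : (0:ℝ) < Real.exp (-t/a) := Real.exp_pos _
    have h2 : (0:ℝ) < Real.exp (-t/ψ) := Real.exp_pos _
    nlinarith [mul_le_mul he1 (by linarith : 1 - Real.exp (-c/b) ≤ 1 - Real.exp (-c/ψ))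
      (by linarith [Real.exp_le_one_iff.2 (by rw [neg_div]; simp [div_nonneg hc hb.le] : -c/b ≤ 0)]) h2.le]
  · have hsub : Set.Ioo (t - c) t ⊆ {x | |x - t| < c} := by
      intro x hx
      simp only [Set.mem_setOf_eq]
      rw [abs_of_nonpos (by linarith [hx.2])]
      linarith [hx.1]
    refine le_trans ?_ (measure_mono hsub)
    rw [laplace_Ioo_nonpos ψ hψ0 t c ht.le hc]
    apply ENNReal.ofReal_le_ofReal
    have heq : (t-c)/ψ = t/ψ + -c/ψ := by ring
    rw [heq, Real.exp_add, abs_of_nonpos ht.le]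
    have he1 : Real.exp (-(-t)/a) ≤ Real.exp (t/ψ) := by
      apply Real.exp_le_exp.2
      rw [neg_neg, div_le_div_iff₀ ha hψ0]
      nlinarith [hψm.1]
    have h1 : (0:ℝ) < Real.exp (-(-t)/a) := Real.exp_pos _
    have h2 : (0:ℝ) < Real.exp (t/ψ) := Real.exp_pos _
    nlinarith [mul_le_mul he1 (by linarith : 1 - Real.exp (-c/b) ≤ 1 - Real.exp (-c/ψ))
      (by linarith [Real.exp_le_one_iff.2 (by rw [neg_div]; simp [div_nonneg hc hb.le] : -c/b ≤ 0)]) h2.le]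

instance laplace.sigmaFinite (ψ : ℝ) : SigmaFinite (laplace ψ) := by
  unfold laplace; infer_instance

theorem stmt_5 (s : ℕ) (ψ : Fin s → ℝ) (a b : ℝ) (ha : 0 < a) (hab : a ≤ b)
    (hψ : ∀ j, ψ j ∈ Set.Icc a b) (δ : ℝ) (hδ : 0 < δ) (η₀ : Fin s → ℝ) :
    ENNReal.ofReal
        (Real.exp (-(s : ℝ) * Real.log 2 - ∑ j, |η₀ j| / a) *
          (1 - Real.exp (-δ / (b * Real.sqrt s))) ^ s) ≤
      Measure.pi (fun j => laplace (ψ j))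
        {η : Fin s → ℝ | Real.sqrt (∑ j, (η j - η₀ j) ^ 2) < δ} := by
  have hb : 0 < b := lt_of_lt_of_le ha hab
  rcases Nat.eq_zero_or_pos s with hs | hs
  · subst hs
    have hset : {η : Fin 0 → ℝ | Real.sqrt (∑ j, (η j - η₀ j) ^ 2) < δ} = Set.univ := by
      ext η
      simp [hδ]
    rw [hset, Measure.pi_univ]
    simp
  · set c := δ / Real.sqrt s with hcdef
    have hs0 : (0:ℝ) < s := by exact_mod_cast hs
    have hsq : 0 < Real.sqrt s := Real.sqrt_pos.2 hs0
    have hc : 0 < c := div_pos hδ hsq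
    have hsub : (Set.univ.pi fun j => {x : ℝ | |x - η₀ j| < c}) ⊆
        {η : Fin s → ℝ | Real.sqrt (∑ j, (η j - η₀ j) ^ 2) < δ} := by
      intro η hη
      simp only [Set.mem_pi, Set.mem_univ, forall_true_left, Set.mem_setOf_eq] at hη ⊢
      rw [Real.sqrt_lt' hδ]
      have hlt : ∀ j, (η j - η₀ j)^2 < c^2 := by
        intro j
        have h := hη j
        nlinarith [abs_nonneg (η j - η₀ j), sq_abs (η j - η₀ j)]
      have hcsq : (s:ℝ) * c^2 = δ^2 := by
        rw [hcdef, div_pow, Real.sq_sqrt hs0.le]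
        field_simp
      calc ∑ j, (η j - η₀ j)^2 < ∑ _j : Fin s, c^2 := by
            apply Finset.sum_lt_sum_of_nonempty
            · exact Finset.univ_nonempty_iff.2 (Fin.pos_iff_nonempty.1 hs)
            · intro j _; exact hlt j
        _ = δ^2 := by rw [Finset.sum_const, Finset.card_univ, Fintype.card_fin,
            nsmul_eq_mul, hcsq]
    refine le_trans ?_ (measure_mono hsub)
    rw [Measure.pi_pi]
    have hE : (-δ / (b * Real.sqrt s)) = -c / b := by
      rw [hcdef]; ring
    have hEnn : 0 ≤ 1 - Real.exp (-c/b) := by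
      have : Real.exp (-c/b) ≤ 1 :=
        Real.exp_le_one_iff.2 (by rw [neg_div]; simp [div_nonneg hc.le hb.le])
      linarith
    calc ENNReal.ofReal
          (Real.exp (-(s : ℝ) * Real.log 2 - ∑ j, |η₀ j| / a) *
            (1 - Real.exp (-δ / (b * Real.sqrt s))) ^ s)
        = ∏ j : Fin s, ENNReal.ofReal
            ((1/2) * Real.exp (-|η₀ j|/a) * (1 - Real.exp (-c/b))) := by
          rw [← ENNReal.ofReal_prod_of_nonneg (fun j _ => by positivity)]
          congr 1
          rw [hE, Finset.prod_mul_distrib, Finset.prod_mul_distrib,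
            Finset.prod_const, Finset.prod_const, Finset.card_univ, Fintype.card_fin]
          have h2 : Real.exp (-(s:ℝ) * Real.log 2) = (1/2:ℝ)^s := by
            rw [show -(s:ℝ) * Real.log 2 = (s:ℝ) * (-Real.log 2) by ring,
              Real.exp_nat_mul, Real.exp_neg, Real.exp_log two_pos]
            norm_num
          have h3 : ∏ j : Fin s, Real.exp (-|η₀ j|/a) =
              Real.exp (-(∑ j, |η₀ j| / a)) := by
            rw [← Real.exp_sum]
            congr 1
            simp [neg_div]
          rw [h3, show (-(s:ℝ) * Real.log 2 - ∑ j, |η₀ j| / a) =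
            (-(s:ℝ) * Real.log 2) + (-(∑ j, |η₀ j| / a)) by ring,
            Real.exp_add, h2]
      _ ≤ ∏ j : Fin s, laplace (ψ j) {x | |x - η₀ j| < c} := by
          apply Finset.prod_le_prod'
          intro j _
          exact laplace_ball (ψ j) a b ha hab (hψ j) (η₀ j) c hc.le
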